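/- The probability that ℓ independent uniformly random elements of the matrix ring M_n(𝔽_q) generate it as a left module over itself equals ∏_{i=0}^{n-1} (1 - q^i / q^{ℓ n}). -/

import Mathlib

open Finset Matrix

lemma span_R_top_iff (F : Type) [Field F] (n ℓ : ℕ) (hn : 1 ≤ n)
    (x : Fin ℓ → Matrix (Fin n) (Fin n) F) :
    Submodule.span (Matrix (Fin n) (Fin n) F) (Set.range x) = ⊤ ↔
      Submodule.span F (Set.range fun p : Fin ℓ × Fin n => x p.1 p.2) = ⊤ := by
  simp only [Submodule.eq_top_iff', Submodule.mem_span_range_iff_exists_fun, smul_eq_mul]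
  constructor
  · intro h w
    obtain ⟨a, ha⟩ := h (Matrix.of fun _ k => w k)
    refine ⟨fun p => a p.1 ⟨0, hn⟩ p.2, ?_⟩
    funext t
    have := congrFun (congrFun ha ⟨0, hn⟩) t
    simp only [Matrix.sum_apply, Matrix.mul_apply, Matrix.of_apply] at this ⊢
    rw [Fintype.sum_prod_type]
    simpa using this
  · intro h m
    choose c hc using fun j => h (m j)
    refine ⟨fun i => Matrix.of fun j k => c j (i, k), ?_⟩
    funext j t
    have := congrFun (hc j) t
    simp only [Matrix.sum_apply, Matrix.mul_apply, Matrix.of_apply] at this ⊢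
    rw [← this, Fintype.sum_prod_type]
    simp [Finset.sum_apply, smul_eq_mul]

lemma rows_span_iff_cols_indep {F : Type} [Field F] {ι : Type} [Fintype ι] {n : ℕ}
    (M : Matrix ι (Fin n) F) :
    Submodule.span F (Set.range M) = ⊤ ↔ LinearIndependent F Mᵀ := by
  have h1 : M.rank = Set.finrank F (Set.range M) := M.rank_eq_finrank_span_row
  have h2 : M.rank = Set.finrank F (Set.range Mᵀ) := M.rank_eq_finrank_span_cols
  refine Iff.trans ?_ linearIndependent_iff_card_eq_finrank_span.symm
  rw [Fintype.card_fin, ← h2, h1]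
  unfold Set.finrank
  constructor
  · intro h
    rw [h, finrank_top, Module.finrank_fintype_fun_eq_card, Fintype.card_fin]
  · intro h
    exact Submodule.eq_top_of_finrank_eq
      (by rw [← h, Module.finrank_fintype_fun_eq_card, Fintype.card_fin])

/-- The probability that `ℓ` independent uniformly random elements of the matrix ring
`M_n(𝔽_q)` generate it as a left module over itself equals
`∏_{i=0}^{n-1} (1 - q^i / q^(ℓ n))`. -/
theorem prob_generate_matrix_ring (F : Type) [Field F] [Fintype F] (q : ℕ)
    (hF : Fintype.card F = q) (n ℓ : ℕ) (hn : 1 ≤ n) (hℓ : 1 ≤ ℓ) :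
    (Nat.card {x : Fin ℓ → Matrix (Fin n) (Fin n) F //
        Submodule.span (Matrix (Fin n) (Fin n) F) (Set.range x) = ⊤} : ℝ) /
      (Nat.card (Fin ℓ → Matrix (Fin n) (Fin n) F) : ℝ)
      = ∏ i ∈ range n, (1 - (q : ℝ) ^ i / (q : ℝ) ^ (ℓ * n)) := by
  have key : ∀ x : Fin ℓ → Matrix (Fin n) (Fin n) F,
      Submodule.span (Matrix (Fin n) (Fin n) F) (Set.range x) = ⊤ ↔
        LinearIndependent F (fun k (p : Fin ℓ × Fin n) => x p.1 p.2 k) := fun x =>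
    (span_R_top_iff F n ℓ hn x).trans
      (rows_span_iff_cols_indep (Matrix.of fun (p : Fin ℓ × Fin n) k => x p.1 p.2 k))
  have e : {x : Fin ℓ → Matrix (Fin n) (Fin n) F //
        Submodule.span (Matrix (Fin n) (Fin n) F) (Set.range x) = ⊤} ≃
      {v : Fin n → (Fin ℓ × Fin n → F) // LinearIndependent F v} :=
    Equiv.subtypeEquiv
      ⟨fun x k p => x p.1 p.2 k, fun v i j k => v k (i, j), fun x => rfl, fun v => rfl⟩
      key
  have hfr : Module.finrank F (Fin ℓ × Fin n → F) = ℓ * n := by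
    rw [Module.finrank_fintype_fun_eq_card, Fintype.card_prod, Fintype.card_fin, Fintype.card_fin]
  have hnum : Nat.card {x : Fin ℓ → Matrix (Fin n) (Fin n) F //
        Submodule.span (Matrix (Fin n) (Fin n) F) (Set.range x) = ⊤}
      = ∏ i ∈ range n, (q ^ (ℓ * n) - q ^ i) := by
    rw [Nat.card_congr e, card_linearIndependent (by rw [hfr]; nlinarith), hfr, hF]
    exact Fin.prod_univ_eq_prod_range (fun i => q ^ (ℓ * n) - q ^ i) n
  have hden : Nat.card (Fin ℓ → Matrix (Fin n) (Fin n) F) = q ^ (ℓ * n * n) := by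
    have hm : Fintype.card (Matrix (Fin n) (Fin n) F) = q ^ (n * n) := by
      rw [show Fintype.card (Matrix (Fin n) (Fin n) F)
          = Fintype.card (Fin n → Fin n → F) from rfl]
      simp [Fintype.card_fun, hF, pow_mul]
    simp only [Nat.card_eq_fintype_card, Fintype.card_fun, hm, Fintype.card_fin, ← pow_mul]
    ring_nf
  have hq : 0 < q := hF ▸ Fintype.card_pos
  rw [hnum, hden]
  have hqR : (0 : ℝ) < (q : ℝ) := by exact_mod_cast hq
  rw [Nat.cast_prod]
  have : ((q : ℝ)) ^ (ℓ * n * n) = ∏ i ∈ range n, (q : ℝ) ^ (ℓ * n) := by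
    rw [Finset.prod_const, card_range, ← pow_mul]
  rw [Nat.cast_pow, this, ← Finset.prod_div_distrib]
  refine Finset.prod_congr rfl fun i hi => ?_
  have hle : q ^ i ≤ q ^ (ℓ * n) := Nat.pow_le_pow_right hq
    (le_trans (le_of_lt (Finset.mem_range.mp hi)) (by nlinarith))
  rw [Nat.cast_sub hle]
  push_cast
  rw [sub_div, div_self (by positivity)]
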